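/- Let G be a finite solvable Frobenius group with abelian Frobenius kernel N, and suppose k(G/Φ(G)) ≥ |G/Φ(G)|^β for a constant 0 < β ≤ 1. Since N = F(G) contains Φ(G) and Φ(G) is abelian, k(G) > |G|^(β/(2+β)). -/

import Mathlib

/-- `N` is a Frobenius kernel of `G`: a proper nontrivial normal subgroup with a
complement acting fixed-point-freely by conjugation. -/
def IsFrobeniusKernel {G : Type*} [Group G] (N : Subgroup G) : Prop :=
  N.Normal ∧ N ≠ ⊥ ∧ N ≠ ⊤ ∧ ∃ H : Subgroup G, N.IsComplement' H ∧
    ∀ h ∈ H, h ≠ 1 → ∀ n ∈ N, h * n * h⁻¹ = n → n = 1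

lemma aux_center {H : Type*} [Group H] [Group.IsNilpotent H] (K : Subgroup H) [K.Normal]
    (hK : K ≠ ⊥) : ∃ k ∈ K, k ≠ 1 ∧ ∀ y : H, y * k = k * y := by
  have hex : ∃ j, K ⊓ Subgroup.upperCentralSeries H j ≠ ⊥ := by
    obtain ⟨n, hn⟩ := Group.IsNilpotent.nilpotent (G := H)
    exact ⟨n, by simpa [hn]⟩
  classical
  have hspec : K ⊓ Subgroup.upperCentralSeries H (Nat.find hex) ≠ ⊥ := Nat.find_spec hex
  have hi0 : Nat.find hex ≠ 0 := by
    intro h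
    rw [h] at hspec
    simp [Subgroup.upperCentralSeries_zero] at hspec
  obtain ⟨m, hm'⟩ : ∃ m, Nat.find hex = m + 1 :=
    ⟨Nat.find hex - 1, (Nat.succ_pred_eq_of_pos (Nat.pos_of_ne_zero hi0)).symm⟩
  rw [hm'] at hspec
  have hm : K ⊓ Subgroup.upperCentralSeries H m = ⊥ := by
    by_contra h
    have h2 : Nat.find hex ≤ m := Nat.find_le h
    omega
  obtain ⟨⟨k, hkmem⟩, hk1⟩ := Subgroup.ne_bot_iff_exists_ne_one.mp hspec
  have hkK : k ∈ K := hkmem.1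
  have hkU : k ∈ Subgroup.upperCentralSeries H (m + 1) := hkmem.2
  refine ⟨k, hkK, by simpa [Subtype.ext_iff] using hk1, fun y => ?_⟩
  have hcomm : k * y * k⁻¹ * y⁻¹ ∈ Subgroup.upperCentralSeries H m :=
    (Subgroup.mem_upperCentralSeries_succ_iff).mp hkU y
  have hcommK : k * y * k⁻¹ * y⁻¹ ∈ K := by
    have h1 : y * k⁻¹ * y⁻¹ ∈ K := Subgroup.Normal.conj_mem ‹K.Normal› _ (K.inv_mem hkK) y
    have := K.mul_mem hkK h1
    simpa [mul_assoc] using this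
  have : k * y * k⁻¹ * y⁻¹ ∈ K ⊓ Subgroup.upperCentralSeries H m := ⟨hcommK, hcomm⟩
  rw [hm, Subgroup.mem_bot] at this
  have h3 : k * y * k⁻¹ = y := mul_inv_eq_one.mp this
  calc y * k = (k * y * k⁻¹) * k := by rw [h3]
    _ = k * y := by group
lemma aux_centralizer {G : Type*} [Group G] {N : Subgroup G} (hN : IsFrobeniusKernel N)
    (hab : ∀ x y : N, Commute x y) {n : G} (hn : n ∈ N) (hn1 : n ≠ 1)
    {x : G} (hx : x * n * x⁻¹ = n) : x ∈ N := by
  obtain ⟨hnorm, -, -, H, hc, hfree⟩ := hN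
  obtain ⟨⟨⟨m, hm⟩, ⟨h, hh⟩⟩, heq, -⟩ := hc.existsUnique x
  simp only at heq
  -- m * n = n * m
  have hmN : m ∈ N := hm
  have hhH : h ∈ H := hh
  have hmn : m * n = n * m := by
    have := congrArg Subtype.val (hab ⟨m, hmN⟩ ⟨n, hn⟩)
    simpa using this
  have hhn : h * n * h⁻¹ = n := by
    rw [← heq] at hx
    have h1 : m * (h * n * h⁻¹) * m⁻¹ = n := by
      calc m * (h * n * h⁻¹) * m⁻¹ = (m * h) * n * (m * h)⁻¹ := by group
        _ = n := hx
    have h2 : h * n * h⁻¹ = m⁻¹ * n * m := by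
      calc h * n * h⁻¹ = m⁻¹ * (m * (h * n * h⁻¹) * m⁻¹) * m := by group
        _ = m⁻¹ * n * m := by rw [h1]
    rw [h2]
    calc m⁻¹ * n * m = m⁻¹ * (n * m) := by group
      _ = m⁻¹ * (m * n) := by rw [← hmn]
      _ = n := by group
  by_cases h1 : h = 1
  · rw [h1, mul_one] at heq
    exact heq ▸ hmN
  · exact absurd (hfree h hh h1 n hn hhn) hn1

lemma aux_frattini_le {G : Type*} [Group G] [Finite G] {N : Subgroup G}
    (hN : IsFrobeniusKernel N) (hab : ∀ x y : N, Commute x y) : frattini G ≤ N := by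
  obtain ⟨n₀', hn₀ne⟩ := Subgroup.ne_bot_iff_exists_ne_one.mp hN.2.1
  obtain ⟨n₀, hn₀N⟩ := n₀'
  have hn₀1 : n₀ ≠ 1 := by simpa [Subtype.ext_iff] using hn₀ne
  have hPnil : Group.IsNilpotent (frattini G) := frattini_nilpotent
  have hPnormal : (frattini G).Normal := inferInstance
  have hNnormal : N.Normal := hN.1
  by_cases hK : frattini G ⊓ N = ⊥
  · intro x hx
    have hc : x * n₀ * x⁻¹ * n₀⁻¹ ∈ frattini G ⊓ N := by
      constructor
      · have h1 : n₀ * x⁻¹ * n₀⁻¹ ∈ frattini G :=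
          hPnormal.conj_mem _ ((frattini G).inv_mem hx) n₀
        have := (frattini G).mul_mem hx h1
        simpa [mul_assoc] using this
      · have h1 : x * n₀ * x⁻¹ ∈ N := hNnormal.conj_mem _ hn₀N x
        exact N.mul_mem h1 (N.inv_mem hn₀N)
    rw [hK, Subgroup.mem_bot] at hc
    exact aux_centralizer hN hab hn₀N hn₀1 (mul_inv_eq_one.mp hc)
  · -- use center of frattini
    haveI := hN.1
    haveI hKnormal : ((frattini G ⊓ N).subgroupOf (frattini G)).Normal :=
      (Subgroup.normal_inf_normal _ _).subgroupOf _
    have hKbot : (frattini G ⊓ N).subgroupOf (frattini G) ≠ ⊥ := by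
      obtain ⟨⟨a, haK⟩, ha1⟩ := Subgroup.ne_bot_iff_exists_ne_one.mp hK
      rw [Subgroup.ne_bot_iff_exists_ne_one]
      refine ⟨⟨⟨a, haK.1⟩, Subgroup.mem_subgroupOf.mpr haK⟩, ?_⟩
      have ha1' : a ≠ 1 := by simpa [Subtype.ext_iff] using ha1
      intro h
      exact ha1' (congrArg (fun z : ↥((frattini G ⊓ N).subgroupOf (frattini G)) => ((z : ↥(frattini G)) : G)) h)
    obtain ⟨k, hkK, hk1, hkcomm⟩ := aux_center _ hKbot
    have hkN : (k : G) ∈ N := (Subgroup.mem_subgroupOf.mp hkK).2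
    have hk1' : (k : G) ≠ 1 := fun h => hk1 (Subtype.ext h)
    intro x hx
    refine aux_centralizer hN hab hkN hk1' (x := x) ?_
    have := hkcomm ⟨x, hx⟩
    rw [Subtype.ext_iff] at this
    push_cast at this
    rw [mul_inv_eq_iff_eq_mul, ← this]

open Finset in
lemma aux_count {G : Type*} [Group G] [Finite G] (A : Subgroup G)
    (habA : ∀ x y : A, Commute x y) (hA : A ≠ ⊤) :
    Nat.card A < Nat.card (ConjClasses G) * A.index := by
  classical
  haveI := Fintype.ofFinite G
  haveI := Fintype.ofFinite (ConjClasses G)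
  set s : Finset G := (A : Set G).toFinset.erase 1 with hs
  set t : Finset (ConjClasses G) := Finset.univ.erase (1 : ConjClasses G) with ht
  have hmk_one : ∀ x : G, ConjClasses.mk x = 1 ↔ x = 1 := by
    intro x
    rw [ConjClasses.one_eq_mk_one, ConjClasses.mk_eq_mk_iff_isConj, isConj_one_left]
  have hmaps : ∀ x ∈ s, ConjClasses.mk x ∈ t := by
    intro x hx
    rcases Finset.mem_erase.mp hx with ⟨hx1, -⟩
    exact Finset.mem_erase.mpr ⟨fun h => hx1 ((hmk_one x).mp h), Finset.mem_univ _⟩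
  have horbit : ∀ a : G, a ∈ A → Fintype.card (MulAction.orbit (ConjAct G) a) ≤ A.index := by
    intro a haA
    have hstab : Fintype.card A ≤ Fintype.card (MulAction.stabilizer (ConjAct G) a) := by
      apply Fintype.card_le_of_injective
        (fun m => ⟨ConjAct.toConjAct (m : G), by
          rw [MulAction.mem_stabilizer_iff, ConjAct.toConjAct_smul]
          have := congrArg Subtype.val (habA m ⟨a, haA⟩)
          simp only [Subgroup.coe_mul] at this
          rw [this]; group⟩)
      intro p q h
      have h2 := Subtype.ext_iff.mp h
      exact Subtype.ext (ConjAct.toConjAct.injective h2)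
    have hos := MulAction.card_orbit_mul_card_stabilizer_eq_card_group (ConjAct G) a
    have hGA : Fintype.card (ConjAct G) = Fintype.card A * A.index := by
      rw [← Nat.card_eq_fintype_card, ← Nat.card_eq_fintype_card, Nat.card_congr
        ConjAct.toConjAct.toEquiv.symm, ← A.card_mul_index]
    have hApos : 0 < Fintype.card A := Fintype.card_pos
    have h1 : Fintype.card (MulAction.orbit (ConjAct G) a) * Fintype.card A ≤
        Fintype.card A * A.index := by
      calc Fintype.card (MulAction.orbit (ConjAct G) a) * Fintype.card A
          ≤ Fintype.card (MulAction.orbit (ConjAct G) a) *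
            Fintype.card (MulAction.stabilizer (ConjAct G) a) :=
            Nat.mul_le_mul_left _ hstab
        _ = Fintype.card (ConjAct G) := hos
        _ = Fintype.card A * A.index := hGA
    rw [mul_comm (Fintype.card A) A.index] at h1
    exact Nat.le_of_mul_le_mul_right h1 hApos
  have hfiber : ∀ b ∈ t, (s.filter (fun x => ConjClasses.mk x = b)).card ≤ A.index := by
    intro b _
    rcases (s.filter (fun x => ConjClasses.mk x = b)).eq_empty_or_nonempty with he | hne
    · rw [he]; simp
    · obtain ⟨a, ha⟩ := hne
      rcases Finset.mem_filter.mp ha with ⟨has, hamk⟩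
      have haA : a ∈ A := by
        have := Finset.mem_of_mem_erase has
        simpa using this
      have hsub : s.filter (fun x => ConjClasses.mk x = b) ⊆
          (MulAction.orbit (ConjAct G) a).toFinset := by
        intro x hx
        rcases Finset.mem_filter.mp hx with ⟨-, hxb⟩
        rw [Set.mem_toFinset, ConjAct.mem_orbit_conjAct]
        rw [← hamk] at hxb
        exact (ConjClasses.mk_eq_mk_iff_isConj.mp hxb)
      calc (s.filter (fun x => ConjClasses.mk x = b)).card
          ≤ (MulAction.orbit (ConjAct G) a).toFinset.card := Finset.card_le_card hsub
        _ = Fintype.card (MulAction.orbit (ConjAct G) a) := Set.toFinset_card _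
        _ ≤ A.index := horbit a haA
  have hmain : s.card ≤ A.index * t.card :=
    Finset.card_le_mul_card_image_of_maps_to hmaps A.index hfiber
  have hscard : s.card = Fintype.card A - 1 := by
    rw [hs, Finset.card_erase_of_mem (Set.mem_toFinset.mpr A.one_mem), Set.toFinset_card]
    congr 1
  have htcard : t.card = Fintype.card (ConjClasses G) - 1 := by
    rw [ht, Finset.card_erase_of_mem (Finset.mem_univ _), Finset.card_univ]
  rw [hscard, htcard] at hmain
  have hApos : 1 ≤ Fintype.card A := Fintype.card_pos
  have hkpos : 1 ≤ Fintype.card (ConjClasses G) := Fintype.card_pos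
  have hidx : 2 ≤ A.index := Subgroup.one_lt_index_of_ne_top hA
  rw [Nat.card_eq_fintype_card, Nat.card_eq_fintype_card]
  obtain ⟨k', hk'⟩ : ∃ k', Fintype.card (ConjClasses G) = k' + 1 :=
    ⟨Fintype.card (ConjClasses G) - 1, by omega⟩
  rw [hk'] at hmain ⊢
  have hring : (k' + 1) * A.index = A.index * k' + A.index := by ring
  simp only [Nat.add_sub_cancel] at hmain
  omega

/-- If `G` is a finite solvable Frobenius group with abelian Frobenius kernel `N`
and `k(G/Φ(G)) ≥ |G/Φ(G)|^β` with `0 < β ≤ 1`, then `k(G) > |G|^(β/(2+β))`. -/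
theorem stmt17 (G : Type*) [Group G] [Finite G] [Group.IsSolvable G] (N : Subgroup G)
    (hN : IsFrobeniusKernel N) (hab : ∀ x y : N, Commute x y)
    (β : ℝ) (hβ0 : 0 < β) (hβ1 : β ≤ 1)
    (hQ : (Nat.card (ConjClasses (G ⧸ frattini G)) : ℝ) ≥
      (Nat.card (G ⧸ frattini G) : ℝ) ^ β) :
    (Nat.card (ConjClasses G) : ℝ) > (Nat.card G : ℝ) ^ (β / (2 + β)) := by
  classical
  set A : Subgroup G := frattini G with hA
  have hA_le : A ≤ N := aux_frattini_le hN hab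
  have habA : ∀ x y : A, Commute x y := by
    intro x y
    have := congrArg Subtype.val (hab ⟨(x : G), hA_le x.2⟩ ⟨(y : G), hA_le y.2⟩)
    simp only [Subgroup.coe_mul] at this
    exact Subtype.ext (by simpa using this)
  have hAtop : A ≠ ⊤ := fun h => hN.2.2.1 (top_le_iff.mp (h ▸ hA_le))
  have hcount : Nat.card A < Nat.card (ConjClasses G) * A.index := aux_count A habA hAtop
  have hquot : Nat.card (ConjClasses (G ⧸ A)) ≤ Nat.card (ConjClasses G) :=
    Nat.card_le_card_of_surjective (ConjClasses.map (QuotientGroup.mk' A))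
      (ConjClasses.map_surjective Quotient.mk''_surjective)
  have hindex : Nat.card (G ⧸ A) = A.index := (Subgroup.index_eq_card A).symm
  have hcardGA : Nat.card A * A.index = Nat.card G := A.card_mul_index
  -- real number abbreviations
  set k : ℝ := (Nat.card (ConjClasses G) : ℝ) with hk
  set f : ℝ := (Nat.card A : ℝ) with hf
  set q : ℝ := (A.index : ℝ) with hq
  set n : ℝ := (Nat.card G : ℝ) with hn
  have hq0 : 0 < q := by
    have : A.index ≠ 0 := Subgroup.index_ne_zero_of_finite
    positivity
  have hn0 : 0 < n := by
    rw [hn]; exact_mod_cast Nat.card_pos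
  have hfq : f * q = n := by rw [hf, hq, hn]; exact_mod_cast hcardGA
  have hfk : f < k * q := by rw [hf, hk, hq]; exact_mod_cast hcount
  have hkq : (Nat.card (ConjClasses (G ⧸ A)) : ℝ) ≤ k := by
    rw [hk]; exact_mod_cast hquot
  have hQ' : (Nat.card (ConjClasses (G ⧸ A)) : ℝ) ≥ q ^ β := by
    rw [hq, ← hindex]; exact_mod_cast hQ
  have hβ2 : (0 : ℝ) < 2 + β := by linarith
  have hgoal_eq : n ^ (β / (2 + β)) = (n ^ (1 / (2 + β))) ^ β := by
    rw [← Real.rpow_mul hn0.le, div_mul_eq_mul_div, one_mul]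
  set t : ℝ := n ^ (1 / (2 + β)) with htdef
  have ht0 : 0 < t := Real.rpow_pos_of_pos hn0 _
  rcases lt_or_ge t q with h | h
  · -- q > t : use quotient bound
    have h1 : t ^ β < q ^ β := Real.rpow_lt_rpow ht0.le h hβ0
    rw [hgoal_eq]
    calc t ^ β < q ^ β := h1
      _ ≤ (Nat.card (ConjClasses (G ⧸ A)) : ℝ) := hQ'
      _ ≤ k := hkq
  · -- q ≤ t : use abelian Frattini bound
    have hqq : 0 < q ^ 2 := by positivity
    have hkgt : n / q ^ 2 < k := by
      rw [div_lt_iff₀ hqq]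
      calc n = f * q := hfq.symm
        _ < (k * q) * q := by
            apply mul_lt_mul_of_pos_right hfk hq0
        _ = k * q ^ 2 := by ring
    have ht2 : t ^ 2 = n ^ (2 / (2 + β)) := by
      rw [htdef, ← Real.rpow_natCast (n ^ (1 / (2 + β))) 2, ← Real.rpow_mul hn0.le]
      congr 1
      push_cast
      field_simp
    have e1 : n ^ ((1 : ℝ) - 2 / (2 + β)) = n / n ^ (2 / (2 + β)) := by
      rw [Real.rpow_sub hn0, Real.rpow_one]
    have e2 : (1 : ℝ) - 2 / (2 + β) = β / (2 + β) := by
      field_simp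
      ring
    have hnd : n / t ^ 2 = n ^ (β / (2 + β)) := by
      rw [ht2, ← e1, e2]
    have hmono : n / t ^ 2 ≤ n / q ^ 2 := by
      gcongr
    calc n ^ (β / (2 + β)) = n / t ^ 2 := hnd.symm
      _ ≤ n / q ^ 2 := hmono
      _ < k := hkgt
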